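/- Let G be a group and A a subset of G. If the right ℤ[G]-submodule of ℤ[G] generated by { 1 − a : a ∈ A } is finitely generated as a right ℤ[G]-module, then the subgroup of G generated by A is finitely generated. -/

import Mathlib

open Finsupp MonoidAlgebra

section Aux

variable {G : Type*} [Group G]

/-- mapDomain of a right translate. -/
lemma aux_mapDomain_mul_single {Q : Type*} (q : G → Q) (x : MonoidAlgebra ℤ G) (g : G) (c : ℤ) :
    Finsupp.mapDomain q (x * MonoidAlgebra.single g c).coeff =
      c • Finsupp.mapDomain (fun g₁ => q (g₁ * g)) x.coeff := by
  induction x using MonoidAlgebra.induction with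
  | zero => simp
  | single_add a b f _ _ ih =>
    rw [add_mul, MonoidAlgebra.coeff_add, Finsupp.mapDomain_add, ih, MonoidAlgebra.coeff_add,
      Finsupp.mapDomain_add, smul_add]
    congr 1
    rw [MonoidAlgebra.single_mul_single, MonoidAlgebra.coeff_single, MonoidAlgebra.coeff_single,
      Finsupp.mapDomain_single, Finsupp.mapDomain_single,
      Finsupp.smul_single]
    rw [smul_eq_mul, mul_comm]

/-- Key lemma: if `1 - a` lies in the right ideal generated by `{1 - b : b ∈ B}`,
then `a` is in the subgroup generated by `B`. -/
lemma aux_mem_closure_of_mem_span {B : Set G} {a : G}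
    (ha : (1 : MonoidAlgebra ℤ G) - MonoidAlgebra.of ℤ G a ∈
      Submodule.span (MonoidAlgebra ℤ G)ᵐᵒᵖ
        ((fun b => (1 : MonoidAlgebra ℤ G) - MonoidAlgebra.of ℤ G b) '' B)) :
    a ∈ Subgroup.closure B := by
  set H := Subgroup.closure B with hH
  set q : G → Quotient (QuotientGroup.rightRel H) := Quotient.mk _ with hq
  -- the quotient map kills `1 - b` for `b ∈ H`
  have hqb : ∀ b ∈ H, q b = q 1 := by
    intro b hb
    exact Quotient.sound ((QuotientGroup.rightRel_apply).2 (by simpa using hb))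
  -- mapDomain q vanishes on the whole span
  have key : ∀ x ∈ Submodule.span (MonoidAlgebra ℤ G)ᵐᵒᵖ
      ((fun b => (1 : MonoidAlgebra ℤ G) - MonoidAlgebra.of ℤ G b) '' B),
      Finsupp.mapDomain q x.coeff = 0 := by
    intro x hx
    induction hx using Submodule.span_induction with
    | mem x hxmem =>
      obtain ⟨b, hb, rfl⟩ := hxmem
      have : (Finsupp.mapDomain.addMonoidHom q) ((1 : MonoidAlgebra ℤ G) - MonoidAlgebra.of ℤ G b).coeff
          = 0 := by
        rw [MonoidAlgebra.coeff_sub, map_sub]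
        have h1 : (1 : MonoidAlgebra ℤ G) = MonoidAlgebra.single 1 1 := rfl
        have h2 : MonoidAlgebra.of ℤ G b = MonoidAlgebra.single b 1 := rfl
        simp only [Finsupp.mapDomain.addMonoidHom_apply, h1, h2, MonoidAlgebra.coeff_single,
          Finsupp.mapDomain_single]
        rw [hqb b (Subgroup.subset_closure hb), sub_self]
      simpa using this
    | zero => simp
    | add x y _ _ hx hy => rw [MonoidAlgebra.coeff_add, Finsupp.mapDomain_add, hx, hy, add_zero]
    | smul r x _ hx =>
      rw [MulOpposite.smul_eq_mul_unop]
      -- show mapDomain q (x * y) = 0 given mapDomain q x = 0, by induction on y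
      have haux : ∀ y : MonoidAlgebra ℤ G, Finsupp.mapDomain q (x * y).coeff = 0 := by
        intro y
        induction y using MonoidAlgebra.induction with
        | zero => simp [show x * (0 : MonoidAlgebra ℤ G) = 0 from mul_zero x]
        | single_add g c f _ _ ih =>
          rw [mul_add, MonoidAlgebra.coeff_add, Finsupp.mapDomain_add, ih, add_zero]
          rw [aux_mapDomain_mul_single q x g c]
          -- q (g₁ * g) = σ (q g₁) for σ induced on the quotient
          have hcompat : ∀ g₁ g₂ : G, (QuotientGroup.rightRel H) g₁ g₂ →
              (QuotientGroup.rightRel H) (g₁ * g) (g₂ * g) := by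
            intro g₁ g₂ h12
            rw [QuotientGroup.rightRel_apply] at h12 ⊢
            simpa [mul_assoc] using h12
          set σ : Quotient (QuotientGroup.rightRel H) → Quotient (QuotientGroup.rightRel H) :=
            Quotient.map (· * g) hcompat with hσ
          have hfun : (fun g₁ => q (g₁ * g)) = σ ∘ q := by
            funext g₁
            rfl
          rw [hfun, Finsupp.mapDomain_comp, hx, Finsupp.mapDomain_zero, smul_zero]
      exact haux _
  have h0 : Finsupp.mapDomain q ((1 : MonoidAlgebra ℤ G) - MonoidAlgebra.of ℤ G a).coeff = 0 :=
    key _ ha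
  have h1 : (1 : MonoidAlgebra ℤ G) = MonoidAlgebra.single 1 1 := rfl
  have h2 : MonoidAlgebra.of ℤ G a = MonoidAlgebra.single a 1 := rfl
  rw [show Finsupp.mapDomain q ((1 : MonoidAlgebra ℤ G) - MonoidAlgebra.of ℤ G a).coeff
      = (Finsupp.mapDomain.addMonoidHom q) ((1 : MonoidAlgebra ℤ G) - MonoidAlgebra.of ℤ G a).coeff
      from rfl, MonoidAlgebra.coeff_sub, map_sub] at h0
  simp only [Finsupp.mapDomain.addMonoidHom_apply, h1, h2, MonoidAlgebra.coeff_single,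
    Finsupp.mapDomain_single] at h0
  have hqa : q a = q 1 := by
    by_contra hne
    have := congrFun (congrArg (DFunLike.coe) h0) (q a)
    simp [Finsupp.single_apply, hne, Ne.symm hne] at this
  have h3 : (1 : G) * a⁻¹ ∈ H := QuotientGroup.rightRel_apply.1 (Quotient.exact hqa)
  simpa using H.inv_mem h3

end Aux

/-- If the right `ℤ[G]`-submodule of `ℤ[G]` generated by
`{1 - a : a ∈ A}` is finitely generated, then the subgroup generated by `A`
is finitely generated. -/
theorem stmt_1 {G : Type*} [Group G] (A : Set G)
    (h : (Submodule.span (MonoidAlgebra ℤ G)ᵐᵒᵖ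
        ((fun a => (1 : MonoidAlgebra ℤ G) - MonoidAlgebra.of ℤ G a) '' A)).FG) :
    (Subgroup.closure A).FG := by
  classical
  set f : G → MonoidAlgebra ℤ G := fun a => (1 : MonoidAlgebra ℤ G) - MonoidAlgebra.of ℤ G a
    with hf
  obtain ⟨s, hs⟩ := h
  -- every element of s lies in the span of finitely many generators
  have hsub : (↑s : Set (MonoidAlgebra ℤ G)) ⊆
      Submodule.span (MonoidAlgebra ℤ G)ᵐᵒᵖ (f '' A) := by
    rw [← hs]; exact Submodule.subset_span
  -- get, for each x ∈ s, a finite subset of the generators spanning it, and take the union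
  have hex : ∀ x : (↑s : Set (MonoidAlgebra ℤ G)), ∃ T : Finset (MonoidAlgebra ℤ G),
      ↑T ⊆ f '' A ∧ (x : MonoidAlgebra ℤ G) ∈ Submodule.span (MonoidAlgebra ℤ G)ᵐᵒᵖ (T : Set _) :=
    fun x => Submodule.mem_span_finite_of_mem_span (hsub x.2)
  choose T hT1 hT3 using hex
  set U : Set (MonoidAlgebra ℤ G) := ⋃ x : (↑s : Set (MonoidAlgebra ℤ G)), ↑(T x) with hU
  have hUfin : U.Finite := Set.finite_iUnion (fun i => (T i).finite_toSet)
  have hUsub : U ⊆ f '' A := Set.iUnion_subset hT1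
  -- choose a finite A₀ ⊆ A with U ⊆ f '' A₀
  obtain ⟨A₀, hA₀sub, hA₀fin, hA₀im⟩ :
      ∃ t ⊆ A, t.Finite ∧ U = f '' t := by
    have : ∃ t ⊆ f '' A, t.Finite ∧ U = t := ⟨U, hUsub, hUfin, rfl⟩
    rcases Set.exists_subset_image_finite_and.1 this with ⟨t, ht, htfin, hteq⟩
    exact ⟨t, ht, htfin, hteq⟩
  -- span (f '' A) ≤ span (f '' A₀)
  have hspan_le : Submodule.span (MonoidAlgebra ℤ G)ᵐᵒᵖ (f '' A) ≤
      Submodule.span (MonoidAlgebra ℤ G)ᵐᵒᵖ (f '' A₀) := by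
    rw [← hs]
    apply Submodule.span_le.2
    intro x hx
    have hxU : x ∈ Submodule.span (MonoidAlgebra ℤ G)ᵐᵒᵖ U :=
      Submodule.span_mono (Set.subset_iUnion (fun i : (↑s : Set (MonoidAlgebra ℤ G)) =>
        ((T i : Finset (MonoidAlgebra ℤ G)) : Set (MonoidAlgebra ℤ G))) ⟨x, hx⟩) (hT3 ⟨x, hx⟩)
    rw [hA₀im] at hxU
    exact hxU
  -- every a ∈ A lies in closure A₀
  have hmem : ∀ a ∈ A, a ∈ Subgroup.closure A₀ := by
    intro a haA
    apply aux_mem_closure_of_mem_span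
    exact hspan_le (Submodule.subset_span ⟨a, haA, rfl⟩)
  -- conclude
  have hle : Subgroup.closure A ≤ Subgroup.closure A₀ :=
    (Subgroup.closure_le _).2 hmem
  have hge : Subgroup.closure A₀ ≤ Subgroup.closure A :=
    Subgroup.closure_mono hA₀sub
  rw [(Subgroup.fg_iff _)]
  exact ⟨A₀, le_antisymm hge hle, hA₀fin⟩
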